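/- Let Z be a proper metric space with an isometric proper G-action, z ∈ Z, and ε > 0 such that g·B(z,7ε) ∩ B(z,7ε) ≠ ∅ implies g ∈ G_z for all g ∈ G. Choose a set-theoretic section s : G/G_z → G of the projection. Then the map G/G_z × B(z,7ε) → G·B(z,7ε), (gG_z, x) ↦ s(gG_z)·x, is a homeomorphism. -/

import Mathlib

theorem stmt3 {G Z : Type*} [Group G] [MetricSpace Z] [ProperSpace Z] [MulAction G Z]
    (z : Z)
    [TopologicalSpace (G ⧸ MulAction.stabilizer G z)]
    [DiscreteTopology (G ⧸ MulAction.stabilizer G z)]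
    (hiso : ∀ g : G, Isometry fun x : Z => g • x)
    (hproper : ∀ w : Z, ∃ U : Set Z, IsOpen U ∧ w ∈ U ∧
      {g : G | ((fun x : Z => g • x) '' U ∩ U).Nonempty}.Finite)
    (ε : ℝ) (hε : 0 < ε)
    (hsep : ∀ g : G,
      ((fun x : Z => g • x) '' Metric.ball z (7 * ε) ∩ Metric.ball z (7 * ε)).Nonempty →
        g ∈ MulAction.stabilizer G z)
    (s : G ⧸ MulAction.stabilizer G z → G)
    (hs : ∀ c : G ⧸ MulAction.stabilizer G z, (s c : G ⧸ MulAction.stabilizer G z) = c) :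
    ∃ e : (G ⧸ MulAction.stabilizer G z) × (Metric.ball z (7 * ε) : Set Z) ≃ₜ
        ({x : Z | ∃ g : G, ∃ a ∈ Metric.ball z (7 * ε), x = g • a} : Set Z),
      ∀ p : (G ⧸ MulAction.stabilizer G z) × (Metric.ball z (7 * ε) : Set Z),
        (e p : Z) = s p.1 • (p.2 : Z) := by
  classical
  set B : Set Z := Metric.ball z (7 * ε) with hB
  set S : Set Z := {x : Z | ∃ g : G, ∃ a ∈ B, x = g • a} with hSdef
  -- each g acts as a homeomorphism
  have hopenmap : ∀ g : G, IsOpenMap (fun x : Z => g • x) := fun g =>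
    (IsometryEquiv.mk (MulAction.toPerm g) (hiso g)).toHomeomorph.isOpenMap
  -- stabilizer elements preserve B
  have hstabB : ∀ h : G, h ∈ MulAction.stabilizer G z → ∀ a ∈ B, h • a ∈ B := by
    intro h hh a ha
    have hz : h • z = z := hh
    have hd : dist (h • a) (h • z) = dist a z := (hiso h).dist_eq a z
    rw [hz] at hd
    simpa [hB, Metric.mem_ball, hd] using ha
  -- the bijection
  set f : (G ⧸ MulAction.stabilizer G z) × (B : Set Z) → (S : Set Z) := fun p =>
    ⟨s p.1 • (p.2 : Z), ⟨s p.1, p.2, p.2.2, rfl⟩⟩ with hf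
  have hinj : Function.Injective f := by
    rintro ⟨c, x⟩ ⟨c', x'⟩ h
    have h1 : s c • (x : Z) = s c' • (x' : Z) := congrArg Subtype.val h
    have hg : ((s c')⁻¹ * s c) • (x : Z) = (x' : Z) := by
      rw [mul_smul, h1, inv_smul_smul]
    have hmem : (s c')⁻¹ * s c ∈ MulAction.stabilizer G z :=
      hsep _ ⟨(x' : Z), ⟨x, x.2, hg⟩, x'.2⟩
    have hcc : c = c' := by
      rw [← hs c, ← hs c']
      exact (QuotientGroup.eq.mpr hmem).symm
    subst hcc
    have : (x : Z) = (x' : Z) := smul_left_cancel _ h1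
    exact Prod.ext rfl (Subtype.ext this)
  have hsurj : Function.Surjective f := by
    rintro ⟨w, g, a, ha, rfl⟩
    have hmem : (s (QuotientGroup.mk g))⁻¹ * g ∈ MulAction.stabilizer G z :=
      QuotientGroup.eq.mp (hs (QuotientGroup.mk g))
    refine ⟨⟨QuotientGroup.mk g,
      ⟨((s (QuotientGroup.mk g))⁻¹ * g) • a, hstabB _ hmem a ha⟩⟩, ?_⟩
    apply Subtype.ext
    show s (QuotientGroup.mk g) • (((s (QuotientGroup.mk g))⁻¹ * g) • a) = g • a
    rw [← mul_smul, ← mul_assoc, mul_inv_cancel, one_mul]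
  -- continuity
  have hcont : Continuous
      (fun p : (G ⧸ MulAction.stabilizer G z) × (B : Set Z) => s p.1 • (p.2 : Z)) := by
    rw [continuous_iff_continuousAt]
    rintro ⟨c, x⟩
    unfold ContinuousAt
    rw [nhds_prod_eq, nhds_discrete (G ⧸ MulAction.stabilizer G z), Filter.pure_prod,
      Filter.tendsto_map'_iff]
    exact ((hiso (s c)).continuous.comp continuous_subtype_val).tendsto x
  -- S is open
  have hSopen : IsOpen S := by
    have : S = ⋃ g : G, (fun x : Z => g • x) '' B := by
      ext w
      simp only [Set.mem_iUnion, Set.mem_image, hSdef, Set.mem_setOf_eq]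
      constructor
      · rintro ⟨g, a, ha, rfl⟩; exact ⟨g, a, ha, rfl⟩
      · rintro ⟨g, a, ha, rfl⟩; exact ⟨g, a, ha, rfl⟩
    rw [this]
    exact isOpen_iUnion fun g => hopenmap g _ Metric.isOpen_ball
  -- f is an open map
  have hfopen : IsOpenMap f := by
    intro W hW
    rw [hSopen.isOpenEmbedding_subtypeVal.isOpen_iff_image_isOpen]
    rw [isOpen_iff_forall_mem_open]
    rintro y ⟨-, ⟨⟨c, x⟩, hcxW, rfl⟩, rfl⟩
    have hslice : IsOpen {u : (B : Set Z) | (c, u) ∈ W} :=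
      hW.preimage (Continuous.prodMk_right c)
    obtain ⟨U, hU, hUeq⟩ := isOpen_induced_iff.mp hslice
    refine ⟨(fun v : Z => s c • v) '' (U ∩ B), ?_, hopenmap _ _ (hU.inter Metric.isOpen_ball), ?_⟩
    · rintro - ⟨v, ⟨hvU, hvB⟩, rfl⟩
      have hv : (⟨v, hvB⟩ : (B : Set Z)) ∈ {u : (B : Set Z) | (c, u) ∈ W} := by
        rw [← hUeq]; exact hvU
      exact ⟨_, ⟨(c, ⟨v, hvB⟩), hv, rfl⟩, rfl⟩
    · have hxU : (x : Z) ∈ U := by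
        have : x ∈ Subtype.val ⁻¹' U := by rw [hUeq]; exact hcxW
        exact this
      exact ⟨x, ⟨hxU, x.2⟩, rfl⟩
  exact ⟨Equiv.toHomeomorphOfContinuousOpen (Equiv.ofBijective f ⟨hinj, hsurj⟩)
    (hcont.subtype_mk _) hfopen, fun p => rfl⟩
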